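/- Let q be a prime and let f(x), g(x) be polynomials with integer coefficients of degrees n and m respectively, with f monic, and each of f, g not identically zero in ℤ/qℤ. For 0 ≤ k ≤ n−1 let r_k(x) = r_{k,n−1}x^{n−1} + ⋯ + r_{k,0} be the remainder of x^k g(x) upon division by f(x), and let A be the n×n integer matrix whose row indexed by k (for k = n−1, n−2, …, 0) is (r_{k,n−1}, r_{k,n−2}, …, r_{k,0}). If the reduction of A modulo q has rank p over the field ℤ/qℤ, then R(f, g) ≡ 0 (mod q^{n−p}); moreover, if the system f(x) ≡ g(x) ≡ 0 (mod q) has exactly ℓ solutions in ℤ/qℤ, then n − p ≥ ℓ. -/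

import Mathlib

open Polynomial

/-- The Sylvester matrix of two integer polynomials `f` (of degree `n = f.natDegree`)
and `g` (of degree `m = g.natDegree`): an `(m + n) × (m + n)` matrix whose first `m`
rows are shifted copies of the coefficients of `f` (in decreasing order of degree)
and whose last `n` rows are shifted copies of the coefficients of `g`. -/
def sylvesterMatrix (f g : Polynomial ℤ) :
    Matrix (Fin (g.natDegree + f.natDegree)) (Fin (g.natDegree + f.natDegree)) ℤ :=
  Matrix.of fun i j =>
    if (i : ℕ) < g.natDegree then
      if (i : ℕ) ≤ (j : ℕ) ∧ (j : ℕ) ≤ (i : ℕ) + f.natDegree then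
        f.coeff (f.natDegree - ((j : ℕ) - (i : ℕ)))
      else 0
    else
      if (i : ℕ) - g.natDegree ≤ (j : ℕ) ∧ (j : ℕ) ≤ ((i : ℕ) - g.natDegree) + g.natDegree then
        g.coeff (g.natDegree - ((j : ℕ) - ((i : ℕ) - g.natDegree)))
      else 0

/-- The resultant `R(f, g)` of two integer polynomials, i.e. the determinant of their
Sylvester matrix. -/
def resultant (f g : Polynomial ℤ) : ℤ :=
  (sylvesterMatrix f g).det

open Matrix


/-- If an integer square matrix has `t` linearly independent kernel vectors mod `q`,
then `q^t` divides its determinant. -/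
theorem det_dvd_of_ker (q : ℕ) (hq : q.Prime) (N t : ℕ) (M : Matrix (Fin N) (Fin N) ℤ)
    (v : Fin t → (Fin N → ZMod q))
    (hv : LinearIndependent (ZMod q) v)
    (hker : ∀ i, (M.map (Int.cast : ℤ → ZMod q)).mulVec (v i) = 0) :
    (q : ℤ) ^ t ∣ M.det := by
  classical
  haveI : Fact q.Prime := ⟨hq⟩
  set M' : Matrix (Fin N) (Fin N) (ZMod q) := M.map (Int.cast : ℤ → ZMod q) with hM'
  -- span of the kernel vectors
  set W : Submodule (ZMod q) (Fin N → ZMod q) := Submodule.span (ZMod q) (Set.range v) with hWdef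
  obtain ⟨Cc, hC⟩ := Submodule.exists_isCompl W
  set s := Module.finrank (ZMod q) Cc with hs
  have hts : t + s = N := by
    have h1 := Submodule.finrank_add_eq_of_isCompl hC
    rw [finrank_span_eq_card hv] at h1
    simpa [Module.finrank_fintype_fun_eq_card] using h1
  -- basis adapted to the span
  let bW : Module.Basis (Fin t) (ZMod q) W := Module.Basis.span hv
  let bC : Module.Basis (Fin s) (ZMod q) Cc := Module.finBasis (ZMod q) Cc
  let e : (Fin t ⊕ Fin s) ≃ Fin N := finSumFinEquiv.trans (finCongr hts)
  let b : Module.Basis (Fin N) (ZMod q) (Fin N → ZMod q) :=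
    ((bW.prod bC).map (Submodule.prodEquivOfIsCompl W Cc hC)).reindex e
  have hb : ∀ j : Fin N, (j : ℕ) < t → ∃ i : Fin t, b j = v i := by
    intro j hj
    rcases h' : e.symm j with i | i
    · refine ⟨i, ?_⟩
      have : b j = (Submodule.prodEquivOfIsCompl W Cc hC) ((bW.prod bC) (Sum.inl i)) := by
        simp [b, Module.Basis.reindex_apply, h', Module.Basis.map_apply]
      rw [this, Module.Basis.prod_apply]
      simp only [Submodule.coe_prodEquivOfIsCompl, bW]
      simp
      exact congrArg Subtype.val (Module.Basis.span_apply hv i)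
    · exfalso
      have : j = e (Sum.inr i) := by rw [← h', Equiv.apply_symm_apply]
      have hval : (j : ℕ) = t + (i : ℕ) := by
        rw [this]; simp [e]
      omega
  -- the basis as an invertible matrix
  set Bbar : Matrix (Fin N) (Fin N) (ZMod q) := (Pi.basisFun (ZMod q) (Fin N)).toMatrix ⇑b with hBbar
  have hBbar_apply : ∀ i j, Bbar i j = b j i := by
    intro i j; simp [hBbar, Module.Basis.toMatrix_apply]
  have hBdet : Bbar.det ≠ 0 := by
    intro h0
    have h1 := Module.Basis.toMatrix_mul_toMatrix_flip (Pi.basisFun (ZMod q) (Fin N)) b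
    have := congrArg Matrix.det h1
    rw [Matrix.det_mul, ← hBbar, h0, zero_mul, Matrix.det_one] at this
    exact zero_ne_one this
  -- lift Bbar to an integer matrix
  have hlift : ∀ i j : Fin N, ∃ z : ℤ, (z : ZMod q) = Bbar i j := fun i j =>
    ZMod.intCast_surjective (Bbar i j)
  choose B0 hB using hlift
  set B : Matrix (Fin N) (Fin N) ℤ := Matrix.of B0 with hBdef2
  have hBmap : B.map (Int.cast : ℤ → ZMod q) = Bbar := by
    ext i j; exact hB i j
  have hqB : ¬ ((q : ℤ) ∣ B.det) := by
    intro hdvd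
    have h0 : ((B.det : ℤ) : ZMod q) = 0 := (ZMod.intCast_zmod_eq_zero_iff_dvd _ _).mpr hdvd
    have h1 : Bbar.det = 0 := by
      rw [← hBmap]
      calc (B.map (Int.cast : ℤ → ZMod q)).det
          = ((B.det : ℤ) : ZMod q) := (RingHom.map_det (Int.castRingHom (ZMod q)) B).symm
        _ = 0 := h0
    exact hBdet h1
  -- columns j < t of M * B are divisible by q
  have hmapMB : ((M * B).map (Int.cast : ℤ → ZMod q)) = M' * Bbar := by
    rw [hM', ← hBmap]
    exact Matrix.map_mul (f := Int.castRingHom (ZMod q))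
  have hdvdcol : ∀ (i j : Fin N), (j : ℕ) < t → (q : ℤ) ∣ (M * B) i j := by
    intro i j hj
    apply (ZMod.intCast_zmod_eq_zero_iff_dvd _ q).mp
    have hmap : (((M * B) i j : ℤ) : ZMod q) = (M' * Bbar) i j := by
      rw [← hmapMB]; rfl
    rw [hmap]
    obtain ⟨i0, hi0⟩ := hb j hj
    have h2 : (M' * Bbar) i j = (M'.mulVec (v i0)) i := by
      rw [Matrix.mul_apply, Matrix.mulVec]
      simp only [dotProduct]
      congr 1; ext k
      rw [hBbar_apply, hi0]
    rw [h2, hker i0]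
    rfl
  -- factor q^t out of the determinant
  have htN : t ≤ N := by omega
  set vv : Fin N → ℤ := fun j => if (j : ℕ) < t then (q : ℤ) else 1 with hvv
  set Cm : Matrix (Fin N) (Fin N) ℤ :=
    Matrix.of (fun i j => if (j : ℕ) < t then (M * B) i j / q else (M * B) i j) with hCm
  have hMB : (M * B) = Matrix.of (fun i j => vv j * Cm i j) := by
    ext i j
    by_cases h : (j : ℕ) < t
    · simp only [Matrix.of_apply, hvv, hCm, if_pos h]
      exact (Int.mul_ediv_cancel' (hdvdcol i j h)).symm
    · simp [hvv, hCm, if_neg h]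
  have hdetMB : (M * B).det = (q : ℤ) ^ t * Cm.det := by
    rw [hMB, Matrix.det_mul_row]
    congr 1
    rw [Fin.prod_univ_eq_prod_range (fun j => if j < t then (q : ℤ) else 1) N]
    rw [Finset.range_eq_Ico, ← Finset.prod_Ico_consecutive _ (Nat.zero_le t) htN]
    rw [← Finset.range_eq_Ico]
    have h1 : (∏ j ∈ Finset.range t, if j < t then (q : ℤ) else 1) = (q : ℤ) ^ t := by
      rw [Finset.prod_congr rfl (fun x hx => if_pos (Finset.mem_range.mp hx))]
      simp
    have h2 : (∏ j ∈ Finset.Ico t N, if j < t then (q : ℤ) else 1) = 1 := by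
      apply Finset.prod_eq_one
      intro x hx
      exact if_neg (Nat.not_lt.mpr (Finset.mem_Ico.mp hx).1)
    rw [h1, h2, mul_one]
  have hdvd : (q : ℤ) ^ t ∣ M.det * B.det := by
    rw [← Matrix.det_mul, hdetMB]
    exact ⟨Cm.det, rfl⟩
  have hcop : IsCoprime ((q : ℤ) ^ t) B.det := by
    apply IsCoprime.pow_left
    rw [Int.isCoprime_iff_gcd_eq_one]
    have h3 : ¬ (q ∣ B.det.natAbs) := by
      intro h
      have h4 : ((q : ℤ)).natAbs ∣ B.det.natAbs := by simpa using h
      exact hqB (Int.natAbs_dvd_natAbs.mp h4)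
    simpa [Int.gcd] using (hq.coprime_iff_not_dvd.mpr h3)
  exact hcop.dvd_of_dvd_mul_right hdvd

theorem poly_eq_zero_of_coeff_lt {R : Type*} [Semiring R] (p : R[X]) (n : ℕ)
    (hd : p.degree < (n : ℕ)) (hc : ∀ e, e < n → p.coeff e = 0) : p = 0 := by
  ext e
  rcases lt_or_ge e n with h | h
  · simp [hc e h]
  · have : p.degree < (e : ℕ) := lt_of_lt_of_le hd (by exact_mod_cast h)
    simp [Polynomial.coeff_eq_zero_of_degree_lt this]

theorem coeff_mul_expand {R : Type*} [CommRing R] (c F : R[X]) (m D : ℕ)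
    (hc : ∀ e, m ≤ e → c.coeff e = 0) :
    (c * F).coeff D =
      ∑ i ∈ Finset.range m, c.coeff (m - 1 - i) * (F * X ^ (m - 1 - i)).coeff D := by
  rcases Nat.eq_zero_or_pos m with hm | hm
  · have hc0 : c = 0 := by
      ext e; exact hc e (hm ▸ Nat.zero_le e)
    simp [hc0, hm]
  · have hdeg : c.natDegree < m := by
      by_cases h0 : c = 0
      · simpa [h0]
      · by_contra h
        exact (Polynomial.leadingCoeff_ne_zero.mpr h0) (hc _ (Nat.le_of_not_lt h))
    have hterm : ∀ e, ((Polynomial.monomial e (c.coeff e)) * F).coeff D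
        = c.coeff e * (F * X ^ e).coeff D := by
      intro e
      rw [← Polynomial.C_mul_X_pow_eq_monomial,
        show (Polynomial.C (c.coeff e) * X ^ e) * F = Polynomial.C (c.coeff e) * (F * X ^ e) by
          ring,
        Polynomial.coeff_C_mul]
    conv_lhs => rw [Polynomial.as_sum_range' c m hdeg]
    rw [Finset.sum_mul, Polynomial.finset_sum_coeff]
    rw [show (∑ e ∈ Finset.range m, ((Polynomial.monomial e (c.coeff e)) * F).coeff D)
        = ∑ e ∈ Finset.range m, c.coeff e * (F * X ^ e).coeff D from
      Finset.sum_congr rfl (fun e _ => hterm e)]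
    exact (Finset.sum_range_reflect (fun e => c.coeff e * (F * X ^ e).coeff D) m).symm

theorem sylvester_entry (f g : Polynomial ℤ) (i j : Fin (g.natDegree + f.natDegree)) :
    sylvesterMatrix f g i j =
      if (i : ℕ) < g.natDegree then
        (f * X ^ (g.natDegree - 1 - (i : ℕ))).coeff (g.natDegree + f.natDegree - 1 - (j : ℕ))
      else
        (g * X ^ (f.natDegree - 1 - ((i : ℕ) - g.natDegree))).coeff
          (g.natDegree + f.natDegree - 1 - (j : ℕ)) := by
  have hi := i.isLt
  have hj := j.isLt
  have hfd : ∀ e, f.natDegree < e → f.coeff e = 0 := fun e he =>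
    Polynomial.coeff_eq_zero_of_natDegree_lt he
  have hgd : ∀ e, g.natDegree < e → g.coeff e = 0 := fun e he =>
    Polynomial.coeff_eq_zero_of_natDegree_lt he
  simp only [sylvesterMatrix, Matrix.of_apply]
  by_cases h : (i : ℕ) < g.natDegree
  · rw [if_pos h, if_pos h, Polynomial.coeff_mul_X_pow']
    by_cases h2 : (i : ℕ) ≤ (j : ℕ) ∧ (j : ℕ) ≤ (i : ℕ) + f.natDegree
    · rw [if_pos h2, if_pos (by omega)]
      congr 1
      omega
    · rw [if_neg h2]
      by_cases h3 : g.natDegree - 1 - (i : ℕ) ≤ g.natDegree + f.natDegree - 1 - (j : ℕ)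
      · rw [if_pos h3]
        exact (hfd _ (by omega)).symm
      · rw [if_neg h3]
  · rw [if_neg h, if_neg h, Polynomial.coeff_mul_X_pow']
    by_cases h2 : (i : ℕ) - g.natDegree ≤ (j : ℕ) ∧
        (j : ℕ) ≤ ((i : ℕ) - g.natDegree) + g.natDegree
    · rw [if_pos h2, if_pos (by omega)]
      congr 1
      omega
    · rw [if_neg h2]
      by_cases h3 : f.natDegree - 1 - ((i : ℕ) - g.natDegree) ≤
          g.natDegree + f.natDegree - 1 - (j : ℕ)
      · rw [if_pos h3]
        exact (hgd _ (by omega)).symm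
      · rw [if_neg h3]

/-- **Corollary 1, first part.** With `A` the `n × n` matrix of remainders
`r_k = x^k g mod f` (rows indexed by `k = n-1, …, 0`, columns recording the
coefficients of `x^{n-1}, …, x^0`), if the reduction of `A` mod `q` has rank `p`,
then `q^{n-p} ∣ R(f, g)`; and if the system `f ≡ g ≡ 0 (mod q)` has exactly `ℓ`
solutions, then `n - p ≥ ℓ`. -/
theorem resultant_dvd_of_rank (q : ℕ) [Fact q.Prime] (f g : Polynomial ℤ) (n m : ℕ)
    (hn : f.natDegree = n) (hm : g.natDegree = m) (hmonic : f.Monic)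
    (hf : f.map (Int.castRingHom (ZMod q)) ≠ 0)
    (hg : g.map (Int.castRingHom (ZMod q)) ≠ 0)
    (A : Matrix (Fin n) (Fin n) ℤ)
    (hA : ∀ i j : Fin n,
      A i j = ((X ^ (n - 1 - (i : ℕ)) * g) %ₘ f).coeff (n - 1 - (j : ℕ)))
    (p : ℕ) (hp : (A.map (Int.cast : ℤ → ZMod q)).rank = p)
    (ℓ : ℕ)
    (hℓ : (Finset.univ.filter fun x : ZMod q =>
        (f.map (Int.castRingHom (ZMod q))).eval x = 0 ∧
        (g.map (Int.castRingHom (ZMod q))).eval x = 0).card = ℓ) :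
    (q : ℤ) ^ (n - p) ∣ _root_.resultant f g ∧ n - p ≥ ℓ := by
  classical
  have hq : q.Prime := Fact.out
  subst hn hm
  set φ := Int.castRingHom (ZMod q) with hφ
  set F := f.map φ with hF
  set G := g.map φ with hG
  have hFm : F.Monic := hmonic.map φ
  have hFdeg : F.natDegree = f.natDegree := by rw [hF, hmonic.natDegree_map φ]
  have hFdegree : F.degree = (f.natDegree : ℕ) := by
    rw [Polynomial.degree_eq_natDegree hFm.ne_zero, hFdeg]
  set rbar : ℕ → (ZMod q)[X] := fun k => (X ^ k * G) %ₘ F with hrbar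
  have hAbar : ∀ i j : Fin f.natDegree,
      (A.map (Int.cast : ℤ → ZMod q)) i j = (rbar (f.natDegree - 1 - (i : ℕ))).coeff (f.natDegree - 1 - (j : ℕ)) := by
    intro i j
    simp only [Matrix.map_apply, hA]
    have h1 : ((((X ^ (f.natDegree - 1 - (i : ℕ)) * g) %ₘ f).coeff (f.natDegree - 1 - (j : ℕ)) : ℤ) : ZMod q)
        = (((X ^ (f.natDegree - 1 - (i : ℕ)) * g) %ₘ f).map φ).coeff (f.natDegree - 1 - (j : ℕ)) :=
      (Polynomial.coeff_map φ _).symm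
    rw [h1, Polynomial.map_modByMonic _ hmonic, Polynomial.map_mul, Polynomial.map_pow,
      Polynomial.map_X]
  have hrdeg : ∀ k, (rbar k).degree < (f.natDegree : ℕ) := by
    intro k
    rw [← hFdegree]
    exact Polynomial.degree_modByMonic_lt _ hFm
  have hrnatdeg : ∀ k, 0 < f.natDegree → (rbar k).natDegree < f.natDegree := by
    intro k hn1
    by_cases h0 : rbar k = 0
    · simpa [h0]
    · exact (Polynomial.natDegree_lt_iff_degree_lt h0).mpr (by exact_mod_cast hrdeg k)
  have hn_pos : ∀ x : ZMod q, F.eval x = 0 → 0 < f.natDegree := by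
    intro x hx
    by_contra h
    have hn0 : F.natDegree = 0 := by omega
    have hF1 : F = 1 := hFm.natDegree_eq_zero.mp hn0
    rw [hF1] at hx
    simp at hx
  have hrank_aux : ∀ (B : Matrix (Fin f.natDegree) (Fin f.natDegree) (ZMod q)), B.rank = p →
      Module.finrank (ZMod q) (LinearMap.ker B.mulVecLin) = f.natDegree - p := by
    intro B hB
    have h1 := LinearMap.finrank_range_add_finrank_ker B.mulVecLin
    have h2 : Module.finrank (ZMod q) (Fin f.natDegree → ZMod q) = f.natDegree := by
      simp [Module.finrank_fintype_fun_eq_card]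
    have hp' : Module.finrank (ZMod q) (LinearMap.range B.mulVecLin) = p := hB
    omega
  constructor
  · -- first part: q^(n-p) ∣ resultant f g
    have hpT : ((A.map (Int.cast : ℤ → ZMod q))ᵀ).rank = p := by
      rw [Matrix.rank_transpose]; exact hp
    have hkerfrT := hrank_aux ((A.map (Int.cast : ℤ → ZMod q))ᵀ) hpT
    let kb : Module.Basis (Fin (f.natDegree - p)) (ZMod q)
        (LinearMap.ker ((A.map (Int.cast : ℤ → ZMod q))ᵀ).mulVecLin) :=
      Module.finBasisOfFinrankEq _ _ hkerfrT
    set u : Fin (f.natDegree - p) → (Fin f.natDegree → ZMod q) :=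
      fun i => ((kb i : _) : Fin f.natDegree → ZMod q) with hu_def
    have hu : LinearIndependent (ZMod q) u :=
      kb.linearIndependent.map' (Submodule.subtype _) (Submodule.ker_subtype _)
    have huker : ∀ i0, ((A.map (Int.cast : ℤ → ZMod q))ᵀ).mulVec (u i0) = 0 := by
      intro i0
      have h1 := LinearMap.mem_ker.mp (kb i0).2
      simpa only [Matrix.mulVecLin_apply] using h1
    set P : (Fin f.natDegree → ZMod q) → (ZMod q)[X] :=
      fun uu => ∑ i : Fin f.natDegree, Polynomial.C (uu i) * X ^ (f.natDegree - 1 - (i : ℕ))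
      with hP
    have hPG : ∀ uu, P uu * G
        = ∑ i : Fin f.natDegree, uu i • (G * X ^ (f.natDegree - 1 - (i : ℕ))) := by
      intro uu
      rw [hP, Finset.sum_mul]
      exact Finset.sum_congr rfl fun i _ => by
        rw [Polynomial.smul_eq_C_mul]; ring
    have hPGcoeff : ∀ uu D, (P uu * G).coeff D
        = ∑ i : Fin f.natDegree, uu i * (G * X ^ (f.natDegree - 1 - (i : ℕ))).coeff D := by
      intro uu D
      rw [hPG, Polynomial.finset_sum_coeff]
      exact Finset.sum_congr rfl fun i _ => by rw [Polynomial.coeff_smul, smul_eq_mul]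
    have hmod : ∀ i0, (P (u i0) * G) %ₘ F = 0 := by
      intro i0
      have hexp : (P (u i0) * G) %ₘ F
          = ∑ i : Fin f.natDegree, u i0 i • rbar (f.natDegree - 1 - (i : ℕ)) := by
        have h1 : (P (u i0) * G) %ₘ F = F.modByMonicHom (P (u i0) * G) :=
          (Polynomial.modByMonicHom_apply _ _).symm
        rw [h1, hPG, map_sum]
        exact Finset.sum_congr rfl fun i _ => by
          rw [_root_.map_smul, Polynomial.modByMonicHom_apply, hrbar,
            mul_comm G (X ^ (f.natDegree - 1 - (i : ℕ)))]
      apply poly_eq_zero_of_coeff_lt _ f.natDegree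
      · rw [← hFdegree]; exact Polynomial.degree_modByMonic_lt _ hFm
      · intro e he
        have hj : f.natDegree - 1 - e < f.natDegree := by omega
        have h2 := congrFun (huker i0) ⟨f.natDegree - 1 - e, hj⟩
        simp only [Matrix.mulVec, dotProduct, Matrix.transpose_apply, Pi.zero_apply] at h2
        rw [hexp, Polynomial.finset_sum_coeff]
        simp only [Polynomial.coeff_smul, smul_eq_mul]
        calc ∑ i : Fin f.natDegree, u i0 i * (rbar (f.natDegree - 1 - (i : ℕ))).coeff e
            = ∑ i : Fin f.natDegree,
                (A.map (Int.cast : ℤ → ZMod q)) i ⟨f.natDegree - 1 - e, hj⟩ * u i0 i := by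
              refine Finset.sum_congr rfl fun i _ => ?_
              rw [hAbar i ⟨f.natDegree - 1 - e, hj⟩]
              rw [show f.natDegree - 1 - ((⟨f.natDegree - 1 - e, hj⟩ : Fin f.natDegree) : ℕ)
                = e by simp; omega]
              ring
          _ = 0 := h2
    have hdvdP : ∀ i0, F ∣ P (u i0) * G := fun i0 =>
      (Polynomial.modByMonic_eq_zero_iff_dvd hFm).mp (hmod i0)
    set cpoly : Fin (f.natDegree - p) → (ZMod q)[X] :=
      fun i0 => (P (u i0) * G) /ₘ F with hcp
    have hFc : ∀ i0, F * cpoly i0 = P (u i0) * G := by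
      intro i0
      have h1 := Polynomial.modByMonic_eq_sub_mul_div (P (u i0) * G) F
      rw [hmod i0] at h1
      exact (sub_eq_zero.mp h1.symm).symm
    have hPdeg : ∀ i0, (P (u i0)).natDegree ≤ f.natDegree - 1 := by
      intro i0
      rw [hP]
      apply Polynomial.natDegree_sum_le_of_forall_le
      intro i _
      refine le_trans (Polynomial.natDegree_C_mul_le _ _) ?_
      rw [Polynomial.natDegree_X_pow]
      have := i.isLt
      omega
    have hGdeg : G.natDegree ≤ g.natDegree := by
      rw [hG]
      exact Polynomial.natDegree_map_le
    have hccoeff : ∀ i0 e, g.natDegree ≤ e → (cpoly i0).coeff e = 0 := by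
      intro i0 e he
      by_cases hc0 : cpoly i0 = 0
      · simp [hc0]
      have hn1 : 0 < f.natDegree := by
        by_contra hh
        have hn0 : f.natDegree = 0 := by omega
        haveI : IsEmpty (Fin f.natDegree) := by rw [hn0]; infer_instance
        have hP0 : P (u i0) = 0 := by
          rw [hP]
          simp
        have h2 := hFc i0
        rw [hP0, zero_mul] at h2
        rcases mul_eq_zero.mp h2 with h3 | h3
        · exact hFm.ne_zero h3
        · exact hc0 h3
      have hnd : (P (u i0) * G).natDegree ≤ (f.natDegree - 1) + g.natDegree :=
        le_trans (Polynomial.natDegree_mul_le) (add_le_add (hPdeg i0) hGdeg)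
      have hFcd : F.natDegree + (cpoly i0).natDegree = (P (u i0) * G).natDegree := by
        rw [← hFc i0, Polynomial.natDegree_mul hFm.ne_zero hc0]
      rw [hFdeg] at hFcd
      have hlt : (cpoly i0).natDegree < g.natDegree := by omega
      exact Polynomial.coeff_eq_zero_of_natDegree_lt (lt_of_lt_of_le hlt he)
    -- build the kernel vectors for the Sylvester matrix
    set w : Fin (f.natDegree - p) → (Fin (g.natDegree + f.natDegree) → ZMod q) := fun i0 i =>
      if h : (i : ℕ) < g.natDegree then -((cpoly i0).coeff (g.natDegree - 1 - (i : ℕ)))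
      else u i0 ⟨(i : ℕ) - g.natDegree, by have := i.isLt; omega⟩ with hw
    have hwind : LinearIndependent (ZMod q) w := by
      apply LinearIndependent.of_comp (LinearMap.funLeft (ZMod q) (ZMod q)
        (fun i : Fin f.natDegree => (Fin.natAdd g.natDegree i : Fin (g.natDegree + f.natDegree))))
      have hcomp : (⇑(LinearMap.funLeft (ZMod q) (ZMod q)
          (fun i : Fin f.natDegree =>
            (Fin.natAdd g.natDegree i : Fin (g.natDegree + f.natDegree)))) ∘ w) = u := by
        funext i0 i
        show w i0 (Fin.natAdd g.natDegree i) = u i0 i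
        rw [hw]
        simp only [Fin.natAdd]
        rw [dif_neg (by omega)]
        congr 1
        ext
        simp
      rw [hcomp]
      exact hu
    have hwker : ∀ i0,
        (((sylvesterMatrix f g)ᵀ).map (Int.cast : ℤ → ZMod q)).mulVec (w i0) = 0 := by
      intro i0
      ext j
      have hSent : ∀ i : Fin (g.natDegree + f.natDegree),
          ((sylvesterMatrix f g i j : ℤ) : ZMod q)
          = if (i : ℕ) < g.natDegree then
              (F * X ^ (g.natDegree - 1 - (i : ℕ))).coeff
                (g.natDegree + f.natDegree - 1 - (j : ℕ))
            else (G * X ^ (f.natDegree - 1 - ((i : ℕ) - g.natDegree))).coeff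
                (g.natDegree + f.natDegree - 1 - (j : ℕ)) := by
        intro i
        rw [sylvester_entry f g i j]
        split_ifs with h1
        · rw [show F * X ^ (g.natDegree - 1 - (i : ℕ))
              = (f * X ^ (g.natDegree - 1 - (i : ℕ))).map φ by
            rw [hF, Polynomial.map_mul, Polynomial.map_pow, Polynomial.map_X]]
          rw [Polynomial.coeff_map]
          rfl
        · rw [show G * X ^ (f.natDegree - 1 - ((i : ℕ) - g.natDegree))
              = (g * X ^ (f.natDegree - 1 - ((i : ℕ) - g.natDegree))).map φ by
            rw [hG, Polynomial.map_mul, Polynomial.map_pow, Polynomial.map_X]]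
          rw [Polynomial.coeff_map]
          rfl
      set Dd := g.natDegree + f.natDegree - 1 - (j : ℕ) with hDd
      set Sf : Fin (g.natDegree + f.natDegree) → ZMod q := fun i =>
        (if (i : ℕ) < g.natDegree then
            (F * X ^ (g.natDegree - 1 - (i : ℕ))).coeff Dd
          else (G * X ^ (f.natDegree - 1 - ((i : ℕ) - g.natDegree))).coeff Dd) * w i0 i
        with hSf
      have h1 : (((sylvesterMatrix f g)ᵀ).map (Int.cast : ℤ → ZMod q)).mulVec (w i0) j
          = ∑ i : Fin (g.natDegree + f.natDegree), Sf i := by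
        simp only [Matrix.mulVec, dotProduct, Matrix.map_apply, Matrix.transpose_apply]
        exact Finset.sum_congr rfl fun i _ => by rw [hSent i, hSf]
      have hsum1 : ∑ i1 : Fin g.natDegree, Sf (Fin.castAdd f.natDegree i1)
          = -((cpoly i0 * F).coeff Dd) := by
        rw [coeff_mul_expand (cpoly i0) F g.natDegree Dd (hccoeff i0)]
        rw [← Finset.sum_neg_distrib]
        refine Eq.trans ?_ (Fin.sum_univ_eq_sum_range (fun i =>
          -((cpoly i0).coeff (g.natDegree - 1 - i)
            * (F * X ^ (g.natDegree - 1 - i)).coeff Dd)) g.natDegree)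
        refine Finset.sum_congr rfl fun i1 _ => ?_
        have hi1 : ((Fin.castAdd f.natDegree i1 : Fin (g.natDegree + f.natDegree)) : ℕ)
            = (i1 : ℕ) := rfl
        rw [hSf]
        simp only [hi1]
        rw [if_pos i1.isLt, hw]
        simp only [hi1]
        rw [dif_pos i1.isLt]
        ring
      have hsum2 : ∑ i2 : Fin f.natDegree, Sf (Fin.natAdd g.natDegree i2)
          = (P (u i0) * G).coeff Dd := by
        rw [hPGcoeff]
        refine Finset.sum_congr rfl fun i2 _ => ?_
        have hi2 : ((Fin.natAdd g.natDegree i2 : Fin (g.natDegree + f.natDegree)) : ℕ)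
            = g.natDegree + (i2 : ℕ) := rfl
        rw [hSf]
        simp only [hi2]
        rw [if_neg (by omega), hw]
        simp only [hi2]
        rw [dif_neg (by omega)]
        rw [show (⟨g.natDegree + (i2 : ℕ) - g.natDegree, by have := i2.isLt; omega⟩
          : Fin f.natDegree) = i2 by ext; simp]
        rw [show g.natDegree + (i2 : ℕ) - g.natDegree = (i2 : ℕ) by omega]
        ring
      show (((sylvesterMatrix f g)ᵀ).map (Int.cast : ℤ → ZMod q)).mulVec (w i0) j = 0
      rw [h1, Fin.sum_univ_add Sf, hsum1, hsum2]
      rw [show cpoly i0 * F = P (u i0) * G by rw [mul_comm]; exact hFc i0]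
      ring
    -- apply the key divisibility lemma
    have hdvd := det_dvd_of_ker q hq (g.natDegree + f.natDegree) (f.natDegree - p)
      ((sylvesterMatrix f g)ᵀ) w hwind hwker
    rw [Matrix.det_transpose] at hdvd
    exact hdvd
  · -- second part: f.natDegree - p ≥ ℓ
    set R := (Finset.univ.filter fun x : ZMod q => F.eval x = 0 ∧ G.eval x = 0) with hR
    have hmemR : ∀ x : ZMod q, x ∈ R → F.eval x = 0 ∧ G.eval x = 0 := by
      intro x hx
      simpa [hR] using hx
    have hkerfr := hrank_aux (A.map (Int.cast : ℤ → ZMod q)) hp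
    set V : ZMod q → (Fin f.natDegree → ZMod q) := fun x j => x ^ (f.natDegree - 1 - (j : ℕ)) with hV
    have hVker : ∀ x : ZMod q, x ∈ R →
        (A.map (Int.cast : ℤ → ZMod q)).mulVecLin (V x) = 0 := by
      intro x hx
      obtain ⟨hx1, hx2⟩ := hmemR x hx
      have hn1 : 0 < f.natDegree := hn_pos x hx1
      ext j
      simp only [Matrix.mulVecLin_apply, Matrix.mulVec, dotProduct, Pi.zero_apply]
      calc ∑ i : Fin f.natDegree, (A.map (Int.cast : ℤ → ZMod q)) j i * V x i
          = ∑ i : Fin f.natDegree, (rbar (f.natDegree - 1 - (j : ℕ))).coeff (f.natDegree - 1 - (i : ℕ)) * x ^ (f.natDegree - 1 - (i : ℕ)) :=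
            Finset.sum_congr rfl fun i _ => by rw [hAbar j i]
        _ = ∑ i ∈ Finset.range f.natDegree,
              (rbar (f.natDegree - 1 - (j : ℕ))).coeff (f.natDegree - 1 - i) * x ^ (f.natDegree - 1 - i) :=
            Fin.sum_univ_eq_sum_range (fun i => (rbar (f.natDegree - 1 - (j : ℕ))).coeff (f.natDegree - 1 - i) * x ^ (f.natDegree - 1 - i)) f.natDegree
        _ = ∑ i ∈ Finset.range f.natDegree, (rbar (f.natDegree - 1 - (j : ℕ))).coeff i * x ^ i :=
            Finset.sum_range_reflect (fun i => (rbar (f.natDegree - 1 - (j : ℕ))).coeff i * x ^ i) f.natDegree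
        _ = (rbar (f.natDegree - 1 - (j : ℕ))).eval x :=
            (Polynomial.eval_eq_sum_range' (hrnatdeg _ hn1) x).symm
        _ = 0 := by
            rw [hrbar]
            simp only []
            rw [Polynomial.modByMonic_eq_sub_mul_div _ F]
            simp [hx1, hx2]
    have hcardR : R.card ≤ f.natDegree := by
      have hsub : R ⊆ F.roots.toFinset := by
        intro x hx
        rw [Multiset.mem_toFinset, Polynomial.mem_roots hFm.ne_zero]
        exact (hmemR x hx).1
      calc R.card ≤ F.roots.toFinset.card := Finset.card_le_card hsub
        _ ≤ Multiset.card F.roots := Multiset.toFinset_card_le _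
        _ ≤ F.natDegree := Polynomial.card_roots' F
        _ = f.natDegree := hFdeg
    have hli : LinearIndependent (ZMod q) (fun x : {y // y ∈ R} =>
        (⟨V (x : ZMod q), by simpa [LinearMap.mem_ker] using hVker (x : ZMod q) x.2⟩ :
          LinearMap.ker (A.map (Int.cast : ℤ → ZMod q)).mulVecLin)) := by
      rw [linearIndependent_iff']
      intro s c hsum y hy
      have hn1 : 0 < f.natDegree := hn_pos (y : ZMod q) (hmemR _ y.2).1
      have hsum2 : ∀ j : Fin f.natDegree,
          ∑ i ∈ s, c i * ((i : ZMod q) ^ (f.natDegree - 1 - (j : ℕ))) = 0 := by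
        intro j
        have h0 := congrArg (fun z => (Subtype.val z : Fin f.natDegree → ZMod q) j) hsum
        simp only [AddSubmonoidClass.coe_finset_sum, SetLike.val_smul, Finset.sum_apply,
          Pi.smul_apply, smul_eq_mul, ZeroMemClass.coe_zero, Pi.zero_apply] at h0
        exact h0
      have hcoord : ∀ e, e < f.natDegree → ∑ i ∈ s, c i * ((i : ZMod q) ^ e) = 0 := by
        intro e he
        have h1 := hsum2 ⟨f.natDegree - 1 - e, by omega⟩
        have h2 : f.natDegree - 1 - (f.natDegree - 1 - e) = e := by omega
        rw [show ((⟨f.natDegree - 1 - e, by omega⟩ : Fin f.natDegree) : ℕ) = f.natDegree - 1 - e from rfl, h2] at h1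
        exact h1
      set hpoly : (ZMod q)[X] := ∏ i ∈ s.erase y, (X - Polynomial.C (i : ZMod q)) with hhp
      have hhdeg : hpoly.natDegree < f.natDegree := by
        have h1 : hpoly.natDegree = (s.erase y).card := by
          rw [hhp, Polynomial.natDegree_prod_of_monic _ _
            (fun i _ => Polynomial.monic_X_sub_C _)]
          simp [Polynomial.natDegree_X_sub_C]
        have h2 : (s.erase y).card < s.card := Finset.card_erase_lt_of_mem hy
        have h3 : s.card ≤ Fintype.card {y // y ∈ R} := by
          simpa using Finset.card_le_univ s
        rw [Fintype.card_coe] at h3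
        omega
      have heval0 : ∑ i ∈ s, c i * hpoly.eval (i : ZMod q) = 0 := by
        calc ∑ i ∈ s, c i * hpoly.eval (i : ZMod q)
            = ∑ i ∈ s, ∑ e ∈ Finset.range f.natDegree, c i * (hpoly.coeff e * (i : ZMod q) ^ e) :=
              Finset.sum_congr rfl fun i _ => by
                rw [Polynomial.eval_eq_sum_range' hhdeg, Finset.mul_sum]
          _ = ∑ e ∈ Finset.range f.natDegree, ∑ i ∈ s, c i * (hpoly.coeff e * (i : ZMod q) ^ e) :=
              Finset.sum_comm
          _ = 0 := Finset.sum_eq_zero fun e he => by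
              have h5 := hcoord e (Finset.mem_range.mp he)
              calc ∑ i ∈ s, c i * (hpoly.coeff e * (i : ZMod q) ^ e)
                  = hpoly.coeff e * ∑ i ∈ s, c i * (i : ZMod q) ^ e := by
                    rw [Finset.mul_sum]
                    exact Finset.sum_congr rfl fun i _ => by ring
                _ = 0 := by rw [h5, mul_zero]
      have heval1 : ∑ i ∈ s, c i * hpoly.eval (i : ZMod q) = c y * hpoly.eval (y : ZMod q) :=
        Finset.sum_eq_single_of_mem y hy fun i hi hne => by
          have h6 : hpoly.eval (i : ZMod q) = 0 := by
            rw [hhp, Polynomial.eval_prod]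
            exact Finset.prod_eq_zero (Finset.mem_erase.mpr ⟨hne, hi⟩) (by simp)
          rw [h6, mul_zero]
      have hy0 : hpoly.eval (y : ZMod q) ≠ 0 := by
        rw [hhp, Polynomial.eval_prod]
        apply Finset.prod_ne_zero_iff.mpr
        intro i hi
        simp only [Polynomial.eval_sub, Polynomial.eval_X, Polynomial.eval_C]
        have hne : i ≠ y := (Finset.mem_erase.mp hi).1
        exact sub_ne_zero.mpr fun hxy => hne (Subtype.ext hxy.symm)
      exact (mul_eq_zero.mp (heval1.symm.trans heval0)).resolve_right hy0
    have hfin := hli.fintype_card_le_finrank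
    rw [hkerfr] at hfin
    rw [ge_iff_le, ← hℓ]
    simpa [Fintype.card_coe] using hfin
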